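/- arXiv:2103.08938 — 5 statements merged into one kernel-verified Lean document; each statement's English description precedes it below -/
import Mathlib

section
/- Let (X, B, μ) be a probability space with an increasing sequence of σ-algebras B₁ ⊆ B₂ ⊆ ... ⊆ B, let k ∈ ℕ, and let (fₙ) be a uniformly bounded sequence of functions with fₙ measurable with respect to B_{n+k}. Then almost surely, (1/N) ∑_{n=1}^N (fₙ − E(fₙ | Bₙ)) → 0 as N → ∞. -/
open MeasureTheory Filter



lemma nat_sqrt_tendsto : Tendsto (fun N => Nat.sqrt N) atTop atTop := by
  refine tendsto_atTop_atTop.2 fun b => ⟨b ^ 2, fun N hN => ?_⟩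
  calc b = Nat.sqrt (b ^ 2) := (Nat.sqrt_eq' b).symm
  _ ≤ Nat.sqrt N := Nat.sqrt_le_sqrt hN

lemma rat_tendsto (C : ℝ) :
    Tendsto (fun j : ℕ => C * (2 * (j : ℝ) + 1) / ((j : ℝ) ^ 2)) atTop (nhds 0) := by
  have heq : (fun j : ℕ => C * (2 * (j : ℝ) + 1) / ((j : ℝ) ^ 2))
      = fun j : ℕ => C * (2 * ((j : ℝ))⁻¹ + ((j : ℝ))⁻¹ ^ 2) := by
    funext j
    rcases Nat.eq_zero_or_pos j with h | h
    · simp [h]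
    · have : ((j : ℝ)) ≠ 0 := Nat.cast_ne_zero.2 h.ne'
      field_simp
  rw [heq]
  have h1 : Tendsto (fun j : ℕ => ((j : ℝ))⁻¹) atTop (nhds 0) :=
    tendsto_inv_atTop_nhds_zero_nat
  have : Tendsto (fun j : ℕ => C * (2 * ((j : ℝ))⁻¹ + ((j : ℝ))⁻¹ ^ 2)) atTop
      (nhds (C * (2 * 0 + 0 ^ 2))) := ((h1.const_mul 2).add (h1.pow 2)).const_mul C
  simpa using this

lemma gap_fill (C : ℝ) (hC : 0 ≤ C) (u : ℕ → ℝ) (hu : ∀ n, |u n| ≤ C)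
    (h : Tendsto (fun j : ℕ => ((j ^ 2 : ℕ) : ℝ)⁻¹ * ∑ n ∈ Finset.Icc 1 (j ^ 2), u n)
      atTop (nhds 0)) :
    Tendsto (fun N : ℕ => ((N : ℝ))⁻¹ * ∑ n ∈ Finset.Icc 1 N, u n) atTop (nhds 0) := by
  set A : ℕ → ℝ := fun N => ((N : ℝ))⁻¹ * ∑ n ∈ Finset.Icc 1 N, u n with hA
  set B : ℕ → ℝ := fun N => |A ((Nat.sqrt N) ^ 2)|
      + C * (2 * (Nat.sqrt N : ℝ) + 1) / ((Nat.sqrt N : ℝ) ^ 2) with hB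
  have hBlim : Tendsto B atTop (nhds 0) := by
    have h1 : Tendsto (fun j : ℕ => |A (j ^ 2)|) atTop (nhds 0) := by simpa only [abs_zero] using h.abs
    have h2 := (h1.comp nat_sqrt_tendsto).add ((rat_tendsto C).comp nat_sqrt_tendsto)
    simpa [Function.comp, hB] using h2
  refine squeeze_zero_norm' ?_ hBlim
  filter_upwards [eventually_ge_atTop 1] with N hN
  set j := Nat.sqrt N with hj
  have hj1 : 1 ≤ j := Nat.one_le_iff_ne_zero.2 (by
    simp only [hj, ne_eq, Nat.sqrt_eq_zero]; omega)
  have hjN : j ^ 2 ≤ N := Nat.sqrt_le' N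
  have hNj : N < (j + 1) ^ 2 := by
    simpa [Nat.succ_eq_add_one] using Nat.lt_succ_sqrt' N
  set P : ℝ := ∑ n ∈ Finset.Icc 1 (j ^ 2), u n with hP
  -- split the sum
  have hsplit : ∑ n ∈ Finset.Icc 1 N, u n = P + ∑ n ∈ Finset.Ioc (j ^ 2) N, u n := by
    rw [hP, show Finset.Icc 1 N = Finset.Ioc 0 N from Finset.Icc_add_one_left_eq_Ioc 0 N,
      show Finset.Icc 1 (j ^ 2) = Finset.Ioc 0 (j ^ 2) from Finset.Icc_add_one_left_eq_Ioc 0 (j ^ 2)]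
    exact (Finset.sum_Ioc_consecutive _ (Nat.zero_le _) hjN).symm
  have hcard : ((Finset.Ioc (j ^ 2) N).card : ℝ) ≤ 2 * (j : ℝ) := by
    have e : (j + 1) ^ 2 = j ^ 2 + 2 * j + 1 := by ring
    rw [e] at hNj
    have : (Finset.Ioc (j ^ 2) N).card ≤ 2 * j := by
      rw [Nat.card_Ioc]; omega
    exact_mod_cast this
  have htail : |∑ n ∈ Finset.Ioc (j ^ 2) N, u n| ≤ C * (2 * (j : ℝ)) := by
    calc |∑ n ∈ Finset.Ioc (j ^ 2) N, u n| ≤ ∑ n ∈ Finset.Ioc (j ^ 2) N, |u n| :=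
        Finset.abs_sum_le_sum_abs _ _
    _ ≤ ∑ _n ∈ Finset.Ioc (j ^ 2) N, C := Finset.sum_le_sum fun n _ => hu n
    _ = ((Finset.Ioc (j ^ 2) N).card : ℝ) * C := by rw [Finset.sum_const, nsmul_eq_mul]
    _ ≤ 2 * (j : ℝ) * C := mul_le_mul_of_nonneg_right hcard hC
    _ = C * (2 * (j : ℝ)) := by ring
  have hjpos : (0 : ℝ) < ((j : ℝ)) ^ 2 := by
    have : (0 : ℝ) < (j : ℝ) := by exact_mod_cast hj1
    positivity
  have hNpos : (0 : ℝ) < (N : ℝ) := by exact_mod_cast hN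
  have hinv : ((N : ℝ))⁻¹ ≤ (((j : ℝ)) ^ 2)⁻¹ := by
    apply inv_anti₀ hjpos
    exact_mod_cast hjN
  have habs : |A (j ^ 2)| = (((j : ℝ)) ^ 2)⁻¹ * |P| := by
    rw [hA]
    push_cast
    rw [abs_mul, abs_inv, abs_pow, Nat.abs_cast, hP]
  have hBN : B N = |A (j ^ 2)| + C * (2 * (j : ℝ) + 1) / ((j : ℝ) ^ 2) := rfl
  have hSbound : |∑ n ∈ Finset.Icc 1 N, u n| ≤ |P| + C * (2 * (j : ℝ)) := by
    rw [hsplit]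
    exact (abs_add_le _ _).trans (by gcongr)
  have e1 : ‖A N‖ = ((N : ℝ))⁻¹ * |∑ n ∈ Finset.Icc 1 N, u n| := by
    rw [hA]; simp [abs_mul, abs_inv]
  rw [e1, hBN, habs]
  calc ((N : ℝ))⁻¹ * |∑ n ∈ Finset.Icc 1 N, u n|
      ≤ (((j : ℝ)) ^ 2)⁻¹ * (|P| + C * (2 * (j : ℝ))) := by
        have h0 : (0 : ℝ) ≤ |P| + C * (2 * (j : ℝ)) := by positivity
        calc ((N : ℝ))⁻¹ * |∑ n ∈ Finset.Icc 1 N, u n|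
            ≤ ((N : ℝ))⁻¹ * (|P| + C * (2 * (j : ℝ))) := by
              exact mul_le_mul_of_nonneg_left hSbound (by positivity)
        _ ≤ (((j : ℝ)) ^ 2)⁻¹ * (|P| + C * (2 * (j : ℝ))) :=
              mul_le_mul_of_nonneg_right hinv h0
  _ = (((j : ℝ)) ^ 2)⁻¹ * |P| + (((j : ℝ)) ^ 2)⁻¹ * (C * (2 * (j : ℝ))) := mul_add _ _ _
  _ ≤ (((j : ℝ)) ^ 2)⁻¹ * |P| + C * (2 * (j : ℝ) + 1) / ((j : ℝ) ^ 2) := by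
      gcongr
      rw [div_eq_inv_mul]
      exact mul_le_mul_of_nonneg_left (by nlinarith) (by positivity)


/-- **Ergodic theorem for martingale differences with lag `k`.**
If `ℬ₁ ⊆ ℬ₂ ⊆ ⋯` is an increasing sequence of sub-σ-algebras, `k ∈ ℕ`, and `(fₙ)` is a
uniformly bounded sequence with `fₙ` measurable w.r.t. `ℬ (n+k)`, then almost surely
`(1/N) ∑_{n=1}^N (fₙ - E(fₙ | ℬₙ)) → 0`. -/
theorem martingale_difference_ergodic_theorem
    {X : Type*} {m : MeasurableSpace X} (μ : Measure X) [IsProbabilityMeasure μ]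
    (ℬ : ℕ → MeasurableSpace X) (hmono : Monotone ℬ) (hle : ∀ n, ℬ n ≤ m)
    (k : ℕ) (f : ℕ → X → ℝ) (C : ℝ) (hbdd : ∀ n x, |f n x| ≤ C)
    (hmeas : ∀ n, Measurable[ℬ (n + k)] (f n)) :
    ∀ᵐ x ∂μ, Tendsto
      (fun N : ℕ => (N : ℝ)⁻¹ * ∑ n ∈ Finset.Icc 1 N, (f n x - (μ[f n | ℬ n]) x))
      atTop (nhds 0) := by
  have hX : Nonempty X := μ.nonempty_of_neZero
  have hC : 0 ≤ C := le_trans (abs_nonneg _) (hbdd 0 (Classical.arbitrary X))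
  set g : ℕ → X → ℝ := fun n => f n - μ[f n | ℬ n] with hg
  have hfm : ∀ n, Measurable (f n) := fun n => (hmeas n).mono (hle _) le_rfl
  have hint : ∀ n, Integrable (f n) μ := fun n => by
    refine Integrable.mono' (integrable_const C) (hfm n).aestronglyMeasurable
      (ae_of_all _ fun x => ?_)
    simpa [Real.norm_eq_abs] using hbdd n x
  have hgint : ∀ n, Integrable (g n) μ := fun n => (hint n).sub integrable_condExp
  have hgsm : ∀ n, StronglyMeasurable[ℬ (n + k)] (g n) := fun n =>
    (hmeas n).stronglyMeasurable.sub
      (stronglyMeasurable_condExp.mono (hmono (Nat.le_add_right n k)))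
  have hgm : ∀ n, Measurable (g n) := fun n =>
    ((hgsm n).mono (hle _)).measurable
  have hgbdd : ∀ n, ∀ᵐ x ∂μ, |g n x| ≤ 2 * C := by
    intro n
    have hae : ∀ᵐ x ∂μ, |f n x| ≤ ((C.toNNReal : NNReal) : ℝ) := by
      refine ae_of_all _ fun x => ?_
      rw [Real.coe_toNNReal C hC]
      exact hbdd n x
    have h1 : ∀ᵐ x ∂μ, |(μ[f n | ℬ n]) x| ≤ ((C.toNNReal : NNReal) : ℝ) :=
      ae_bdd_condExp_of_ae_bdd hae
    filter_upwards [h1] with x hx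
    rw [Real.coe_toNNReal C hC] at hx
    have h2 := hbdd n x
    have h3 : |g n x| ≤ |f n x| + |(μ[f n | ℬ n]) x| := abs_sub _ _
    linarith
  have hcond0 : ∀ n, μ[g n | ℬ n] =ᵐ[μ] 0 := by
    intro n
    have h1 : μ[g n | ℬ n] =ᵐ[μ] μ[f n | ℬ n] - μ[μ[f n | ℬ n] | ℬ n] :=
      condExp_sub (hint n) integrable_condExp _
    have h2 : μ[μ[f n | ℬ n] | ℬ n] =ᵐ[μ] μ[f n | ℬ n] :=
      condExp_condExp_of_le le_rfl (hle n)
    filter_upwards [h1, h2] with x hx1 hx2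
    simp only [Pi.sub_apply, Pi.zero_apply] at *
    rw [hx1, hx2, sub_self]
  have hprodint : ∀ n m', Integrable (g n * g m') μ := by
    intro n m'
    refine Integrable.mono' (integrable_const ((2 * C) * (2 * C)))
      ((hgm n).aestronglyMeasurable.mul (hgm m').aestronglyMeasurable) ?_
    filter_upwards [hgbdd n, hgbdd m'] with x h1 h2
    rw [Pi.mul_apply, Real.norm_eq_abs, abs_mul]
    exact mul_le_mul h1 h2 (abs_nonneg _) (by linarith)
  have horth : ∀ n m', n + k ≤ m' → ∫ x, g n x * g m' x ∂μ = 0 := by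
    intro n m' hnm
    have hsm : StronglyMeasurable[ℬ m'] (g n) := (hgsm n).mono (hmono hnm)
    have hpull : μ[g n * g m' | ℬ m'] =ᵐ[μ] g n * μ[g m' | ℬ m'] :=
      condExp_mul_of_stronglyMeasurable_left hsm (hprodint n m') (hgint m')
    have h2 : μ[g n * g m' | ℬ m'] =ᵐ[μ] 0 := by
      refine hpull.trans ?_
      filter_upwards [hcond0 m'] with x hx
      simp [Pi.mul_apply, hx]
    have h3 : ∫ x, (g n * g m') x ∂μ = 0 := by
      rw [show (∫ x, (g n * g m') x ∂μ) = ∫ x, (μ[g n * g m' | ℬ m']) x ∂μ from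
        (integral_condExp (hle m') (f := g n * g m')).symm, integral_congr_ae h2]
      simp
    simpa using h3
  -- the abstract inner product
  set e : ℕ → ℕ → ℝ := fun n m' => ∫ x, g n x * g m' x ∂μ with he
  have heabs : ∀ n m', |e n m'| ≤ 4 * C ^ 2 := by
    intro n m'
    have h1 : |e n m'| ≤ ∫ x, |g n x| * |g m' x| ∂μ := by
      simpa using norm_integral_le_integral_norm (fun x => g n x * g m' x) (μ := μ)
    refine h1.trans ?_
    have habsint : Integrable (fun x => |g n x| * |g m' x|) μ := by
      have := (hprodint n m').abs
      refine this.congr (ae_of_all _ fun x => ?_)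
      simp [abs_mul]
    have h2 : ∫ x, |g n x| * |g m' x| ∂μ ≤ ∫ _x, 4 * C ^ 2 ∂μ := by
      refine integral_mono_ae habsint (integrable_const _) ?_
      filter_upwards [hgbdd n, hgbdd m'] with x h1 h2
      nlinarith [abs_nonneg (g n x), abs_nonneg (g m' x)]
    simpa using h2
  have he0 : ∀ n m', ¬(m' < n + k ∧ n < m' + k) → e n m' = 0 := by
    intro n m' hnot
    rcases (by omega : n + k ≤ m' ∨ m' + k ≤ n) with h | h
    · exact horth n m' h
    · rw [he]
      simp only
      rw [show (fun x => g n x * g m' x) = fun x => g m' x * g n x from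
        funext fun x => mul_comm _ _]
      exact horth m' n h
  -- second moment bound
  have hS2 : ∀ N : ℕ, ∫ x, (∑ n ∈ Finset.Icc 1 N, g n x) ^ 2 ∂μ
      ≤ (N : ℝ) * ((2 * k + 1) * (4 * C ^ 2)) := by
    intro N
    have hexp : ∀ x, (∑ n ∈ Finset.Icc 1 N, g n x) ^ 2
        = ∑ n ∈ Finset.Icc 1 N, ∑ m' ∈ Finset.Icc 1 N, g n x * g m' x := by
      intro x
      rw [sq, Finset.sum_mul_sum]
    have hint1 : ∀ n, Integrable (fun x => ∑ m' ∈ Finset.Icc 1 N, g n x * g m' x) μ := by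
      intro n
      exact integrable_finset_sum _ fun m' _ => hprodint n m'
    have hintegral : ∫ x, (∑ n ∈ Finset.Icc 1 N, g n x) ^ 2 ∂μ
        = ∑ n ∈ Finset.Icc 1 N, ∑ m' ∈ Finset.Icc 1 N, e n m' := by
      simp_rw [hexp]
      rw [integral_finset_sum (Finset.Icc 1 N)
        (f := fun n x => ∑ m' ∈ Finset.Icc 1 N, g n x * g m' x) fun n _ => hint1 n]
      refine Finset.sum_congr rfl fun n _ => ?_
      rw [integral_finset_sum (Finset.Icc 1 N)
        (f := fun m' x => g n x * g m' x) fun m' _ => hprodint n m']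
    rw [hintegral]
    have hrow : ∀ n, ∑ m' ∈ Finset.Icc 1 N, e n m' ≤ (2 * k + 1) * (4 * C ^ 2) := by
      intro n
      have hfilter : ∑ m' ∈ Finset.Icc 1 N, e n m'
          = ∑ m' ∈ (Finset.Icc 1 N).filter (fun m' => m' < n + k ∧ n < m' + k), e n m' := by
        refine (Finset.sum_filter_of_ne fun m' _ hne => ?_).symm
        by_contra hnot
        exact hne (he0 n m' hnot)
      rw [hfilter]
      have hsub : (Finset.Icc 1 N).filter (fun m' => m' < n + k ∧ n < m' + k)
          ⊆ Finset.Ico (n + 1 - k) (n + k) := by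
        intro m' hm'
        simp only [Finset.mem_filter, Finset.mem_Icc] at hm'
        simp only [Finset.mem_Ico]
        omega
      have hcard : ((Finset.Icc 1 N).filter (fun m' => m' < n + k ∧ n < m' + k)).card
          ≤ 2 * k + 1 := by
        refine (Finset.card_le_card hsub).trans ?_
        rw [Nat.card_Ico]
        omega
      calc ∑ m' ∈ (Finset.Icc 1 N).filter (fun m' => m' < n + k ∧ n < m' + k), e n m'
          ≤ ∑ m' ∈ (Finset.Icc 1 N).filter (fun m' => m' < n + k ∧ n < m' + k), (4 * C ^ 2) :=
            Finset.sum_le_sum fun m' _ => (le_abs_self _).trans (heabs n m')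
      _ = (((Finset.Icc 1 N).filter (fun m' => m' < n + k ∧ n < m' + k)).card : ℝ)
            * (4 * C ^ 2) := by rw [Finset.sum_const, nsmul_eq_mul]
      _ ≤ ((2 * k + 1 : ℕ) : ℝ) * (4 * C ^ 2) := by
            refine mul_le_mul_of_nonneg_right ?_ (by positivity)
            exact_mod_cast hcard
      _ = (2 * k + 1) * (4 * C ^ 2) := by push_cast; ring
    calc ∑ n ∈ Finset.Icc 1 N, ∑ m' ∈ Finset.Icc 1 N, e n m'
        ≤ ∑ _n ∈ Finset.Icc 1 N, ((2 * k + 1) * (4 * C ^ 2)) :=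
          Finset.sum_le_sum fun n _ => hrow n
    _ = ((Finset.Icc 1 N).card : ℝ) * ((2 * k + 1) * (4 * C ^ 2)) := by
          rw [Finset.sum_const, nsmul_eq_mul]
    _ = (N : ℝ) * ((2 * k + 1) * (4 * C ^ 2)) := by rw [Nat.card_Icc]; norm_num
  set D : ℝ := (2 * k + 1) * (4 * C ^ 2) with hD
  have hD0 : 0 ≤ D := by positivity
  set S : ℕ → X → ℝ := fun N x => ∑ n ∈ Finset.Icc 1 N, g n x with hS
  set F : ℕ → X → ℝ := fun j x => (((j ^ 2 : ℕ) : ℝ)⁻¹ * S (j ^ 2) x) ^ 2 with hF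
  have hSm : ∀ N, Measurable (S N) := fun N => Finset.measurable_sum _ fun n _ => hgm n
  have hFm : ∀ j, Measurable (F j) := fun j => ((hSm _).const_mul _).pow_const 2
  have hSbdd : ∀ N, ∀ᵐ x ∂μ, |S N x| ≤ 2 * C * N := by
    intro N
    filter_upwards [ae_all_iff.2 hgbdd] with x hx
    calc |S N x| ≤ ∑ n ∈ Finset.Icc 1 N, |g n x| := Finset.abs_sum_le_sum_abs _ _
    _ ≤ ∑ _n ∈ Finset.Icc 1 N, (2 * C) := Finset.sum_le_sum fun n _ => hx n
    _ = ((Finset.Icc 1 N).card : ℝ) * (2 * C) := by rw [Finset.sum_const, nsmul_eq_mul]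
    _ ≤ (N : ℝ) * (2 * C) := by
        refine mul_le_mul_of_nonneg_right ?_ (by positivity)
        rw [Nat.card_Icc]
        simp
    _ = 2 * C * N := by ring
  have hFint : ∀ j, Integrable (F j) μ := by
    intro j
    refine Integrable.mono' (integrable_const (((((j ^ 2 : ℕ) : ℝ))⁻¹
      * (2 * C * ((j ^ 2 : ℕ) : ℝ))) ^ 2)) (hFm j).aestronglyMeasurable ?_
    filter_upwards [hSbdd (j ^ 2)] with x hx
    rw [Real.norm_eq_abs, hF]
    simp only [abs_pow]
    refine pow_le_pow_left₀ (abs_nonneg _) ?_ 2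
    rw [abs_mul, abs_inv, Nat.abs_cast]
    refine mul_le_mul_of_nonneg_left hx (by positivity)
  have hFI : ∀ j, ∫ x, F j x ∂μ ≤ D / (j : ℝ) ^ 2 := by
    intro j
    rcases Nat.eq_zero_or_pos j with h | h
    · subst h
      simp [hF, hS]
    · have hjne : ((j : ℝ)) ≠ 0 := Nat.cast_ne_zero.2 h.ne'
      have e1 : ∀ x, F j x = (((j ^ 2 : ℕ) : ℝ)⁻¹) ^ 2 * (S (j ^ 2) x) ^ 2 := fun x => by
        rw [hF]; ring
      have e2 : ∫ x, F j x ∂μ = (((j ^ 2 : ℕ) : ℝ)⁻¹) ^ 2 * ∫ x, (S (j ^ 2) x) ^ 2 ∂μ := by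
        simp_rw [e1]
        exact integral_const_mul _ _
      rw [e2]
      have h3 := hS2 (j ^ 2)
      calc (((j ^ 2 : ℕ) : ℝ)⁻¹) ^ 2 * ∫ x, (S (j ^ 2) x) ^ 2 ∂μ
          ≤ (((j ^ 2 : ℕ) : ℝ)⁻¹) ^ 2 * (((j ^ 2 : ℕ) : ℝ) * D) := by
            refine mul_le_mul_of_nonneg_left ?_ (by positivity)
            exact h3
      _ = D / (j : ℝ) ^ 2 := by
            push_cast
            field_simp
  have hsummable : Summable (fun j => ∫ x, F j x ∂μ) := by
    refine Summable.of_nonneg_of_le (fun j => integral_nonneg fun x => sq_nonneg _) hFI ?_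
    have h1 : Summable (fun j : ℕ => 1 / (j : ℝ) ^ 2) :=
      Real.summable_one_div_nat_pow.2 one_lt_two
    have := h1.mul_left D
    refine this.congr fun j => ?_
    ring
  have hlint : ∫⁻ x, ∑' j, ENNReal.ofReal (F j x) ∂μ < ⊤ := by
    rw [lintegral_tsum fun j => ((hFm j).ennreal_ofReal).aemeasurable]
    have h1 : ∀ j, ∫⁻ x, ENNReal.ofReal (F j x) ∂μ = ENNReal.ofReal (∫ x, F j x ∂μ) :=
      fun j => (ofReal_integral_eq_lintegral_ofReal (hFint j)
        (ae_of_all _ fun x => sq_nonneg _)).symm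
    simp_rw [h1]
    rw [← ENNReal.ofReal_tsum_of_nonneg (fun j => integral_nonneg fun x => sq_nonneg _)
      hsummable]
    exact ENNReal.ofReal_lt_top
  have haeF : ∀ᵐ x ∂μ, ∑' j, ENNReal.ofReal (F j x) < ⊤ :=
    ae_lt_top (Measurable.ennreal_tsum fun j => (hFm j).ennreal_ofReal) hlint.ne
  filter_upwards [haeF, ae_all_iff.2 hgbdd] with x hx hbx
  have hsum : Summable (fun j => F j x) := by
    have h1 := ENNReal.summable_toReal hx.ne
    refine h1.congr fun j => ?_
    rw [ENNReal.toReal_ofReal (sq_nonneg _)]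
  have h0 : Tendsto (fun j => F j x) atTop (nhds 0) := hsum.tendsto_atTop_zero
  have habs : Tendsto (fun j : ℕ => |((j ^ 2 : ℕ) : ℝ)⁻¹ * S (j ^ 2) x|) atTop (nhds 0) := by
    have h2 := (Real.continuous_sqrt.tendsto 0).comp h0
    simpa only [Function.comp_def, hF, Real.sqrt_sq_eq_abs, Real.sqrt_zero] using h2
  have hten : Tendsto (fun j : ℕ => ((j ^ 2 : ℕ) : ℝ)⁻¹ * ∑ n ∈ Finset.Icc 1 (j ^ 2), g n x)
      atTop (nhds 0) := (tendsto_zero_iff_abs_tendsto_zero _).2 habs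
  exact gap_fill (2 * C) (by linarith) (fun n => g n x) hbx hten
end

section
/- Let ν be a Borel probability measure on ℝ, b > 1, r > 0, and m ≠ 0 a real number. Then ∫_0^1 |∫ e^{2πi m b^t y} dν(y)|² dt ≤ 1/(r·|m|·ln b) + ∫ ν(B_r(y)) dν(y). -/
open MeasureTheory Complex intervalIntegral

noncomputable def ee (θ : ℝ) : ℂ := Complex.exp (θ * Complex.I)

lemma ee_norm (θ : ℝ) : ‖ee θ‖ = 1 := by
  simp [ee, Complex.norm_exp_ofReal_mul_I]

lemma exp_int (L : ℝ) (hL : 0 < L) :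
    ∫ t in (0:ℝ)..1, Real.exp (-(L * t)) = (1 - Real.exp (-L)) / L := by
  have h : ∀ t ∈ Set.uIcc (0:ℝ) 1,
      HasDerivAt (fun t => -Real.exp (-(L * t)) / L) (Real.exp (-(L * t))) t := by
    intro t _
    have h1 : HasDerivAt (fun t : ℝ => -(L * t)) (-L) t := by
      simpa using ((hasDerivAt_id t).const_mul L).fun_neg
    have h2 := (Real.hasDerivAt_exp (-(L * t))).comp t h1
    have h3 : HasDerivAt (fun t => -Real.exp (-(L * t)) / L) (-(Real.exp (-(L * t)) * -L) / L) t := (h2.fun_neg).div_const L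
    convert h3 using 1
    all_goals (try field_simp); (try ring)
  rw [intervalIntegral.integral_eq_sub_of_hasDerivAt h (by
    apply Continuous.intervalIntegrable; continuity)]
  simp
  ring

lemma osc (L : ℝ) (hL : 0 < L) (lam : ℝ) (hlam : lam ≠ 0) :
    ‖∫ t in (0:ℝ)..1, ee (lam * Real.exp (L * t))‖ ≤ 2 / (|lam| * L) := by
  set θ : ℝ → ℝ := fun t => lam * Real.exp (L * t) with hθdef
  set ρ : ℝ → ℝ := fun t => Real.exp (-(L * t)) / (lam * L) with hρdef
  set ρ' : ℝ → ℝ := fun t => -Real.exp (-(L * t)) / lam with hρ'def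
  -- u, v for integration by parts
  set u : ℝ → ℂ := fun t => (ρ t : ℂ) * (-Complex.I) with hudef
  set v : ℝ → ℂ := fun t => ee (θ t) with hvdef
  set u' : ℝ → ℂ := fun t => (ρ' t : ℂ) * (-Complex.I) with hu'def
  set v' : ℝ → ℂ := fun t => ee (θ t) * ((lam * (Real.exp (L * t) * L) : ℝ) * Complex.I) with hv'def
  have hLt : ∀ t : ℝ, HasDerivAt (fun s => L * s) L t := fun t => by
    simpa using (hasDerivAt_id t).const_mul L
  have hu : ∀ t : ℝ, HasDerivAt u (u' t) t := by
    intro t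
    have h1 : HasDerivAt (fun s : ℝ => Real.exp (-(L * s))) (-(L) * Real.exp (-(L * t))) t := by
      have := (Real.hasDerivAt_exp (-(L * t))).comp t ((hLt t).fun_neg)
      have this : HasDerivAt (fun s : ℝ => Real.exp (-(L * s))) (Real.exp (-(L * t)) * -L) t := this
      convert this using 1; ring
    have h2 : HasDerivAt ρ (ρ' t) t := by
      have : HasDerivAt ρ (-(L) * Real.exp (-(L * t)) / (lam * L)) t := h1.div_const (lam * L)
      convert this using 1
      simp only [hρ'def]; field_simp
    exact (h2.ofReal_comp).mul_const (-Complex.I)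
  have hv : ∀ t : ℝ, HasDerivAt v (v' t) t := by
    intro t
    have h1 : HasDerivAt θ (lam * (Real.exp (L * t) * L)) t :=
      ((Real.hasDerivAt_exp (L * t)).comp t (hLt t)).const_mul lam
    have h2 : HasDerivAt (fun s => (θ s : ℂ) * Complex.I)
        ((lam * (Real.exp (L * t) * L) : ℝ) * Complex.I) t :=
      (h1.ofReal_comp).mul_const Complex.I
    exact h2.cexp
  have hcont_ρ' : Continuous ρ' := by fun_prop
  have hint_u' : IntervalIntegrable u' volume 0 1 := by
    apply Continuous.intervalIntegrable
    exact (Complex.continuous_ofReal.comp hcont_ρ').mul continuous_const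
  have hint_v' : IntervalIntegrable v' volume 0 1 := by
    apply Continuous.intervalIntegrable
    apply Continuous.mul
    · exact Complex.continuous_exp.comp ((Complex.continuous_ofReal.comp (by fun_prop)).mul continuous_const)
    · exact (Complex.continuous_ofReal.comp (by fun_prop)).mul continuous_const
  have ibp := intervalIntegral.integral_mul_deriv_eq_deriv_mul
    (fun t _ => hu t) (fun t _ => hv t) hint_u' hint_v'
  -- ∫ u v' = u 1 v 1 - u 0 v 0 - ∫ u' v
  have hptw : ∀ t : ℝ, u t * v' t = ee (θ t) := by
    intro t
    have hexp : Real.exp (-(L * t)) * Real.exp (L * t) = 1 := by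
      rw [← Real.exp_add]; simp
    have hI : (-Complex.I) * Complex.I = 1 := by
      simp [mul_comm, Complex.I_mul_I]
    have hre : ρ t * (lam * (Real.exp (L * t) * L)) = 1 := by
      simp only [hρdef]
      field_simp
      linear_combination hexp
    calc u t * v' t
        = ee (θ t) * ((ρ t * (lam * (Real.exp (L * t) * L)) : ℝ) : ℂ) * (-Complex.I * Complex.I) := by
          simp only [hudef, hv'def]; push_cast; ring
      _ = ee (θ t) := by rw [hre, hI]; simp
  have hlam' : (0:ℝ) < |lam| := abs_pos.mpr hlam
  have heq : (∫ t in (0:ℝ)..1, ee (lam * Real.exp (L * t)))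
      = u 1 * v 1 - u 0 * v 0 - ∫ t in (0:ℝ)..1, u' t * v t := by
    rw [← ibp]
    apply intervalIntegral.integral_congr
    intro t _
    exact (hptw t).symm
  rw [heq]
  have hnormuv : ∀ t : ℝ, ‖u t * v t‖ = |ρ t| := by
    intro t
    simp only [hudef, hvdef]
    rw [norm_mul, norm_mul, ee_norm]
    simp
  have hnormu'v : ∀ t : ℝ, ‖u' t * v t‖ = Real.exp (-(L * t)) / |lam| := by
    intro t
    simp only [hu'def, hvdef]
    rw [norm_mul, norm_mul, ee_norm]
    simp [hρ'def, abs_div, abs_of_pos (Real.exp_pos _), ← Complex.ofReal_mul, ← Complex.ofReal_neg, Complex.norm_exp_ofReal]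
  have h1 : ‖u 1 * v 1‖ = Real.exp (-L) / (|lam| * L) := by
    rw [hnormuv]
    simp only [hρdef]
    rw [abs_div, abs_of_pos (Real.exp_pos _), abs_mul, abs_of_pos hL]
    norm_num
  have h0 : ‖u 0 * v 0‖ = 1 / (|lam| * L) := by
    rw [hnormuv]
    simp only [hρdef]
    rw [abs_div, abs_of_pos (Real.exp_pos _), abs_mul, abs_of_pos hL]
    norm_num
  have h3 : ‖∫ t in (0:ℝ)..1, u' t * v t‖ ≤ (1 - Real.exp (-L)) / L / |lam| := by
    refine le_trans (intervalIntegral.norm_integral_le_integral_norm zero_le_one) ?_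
    have : (∫ t in (0:ℝ)..1, ‖u' t * v t‖) = (∫ t in (0:ℝ)..1, Real.exp (-(L * t))) / |lam| := by
      rw [← intervalIntegral.integral_div]
      apply intervalIntegral.integral_congr
      intro t _
      exact hnormu'v t
    rw [this, exp_int L hL]
  calc ‖u 1 * v 1 - u 0 * v 0 - ∫ t in (0:ℝ)..1, u' t * v t‖
      ≤ ‖u 1 * v 1 - u 0 * v 0‖ + ‖∫ t in (0:ℝ)..1, u' t * v t‖ := norm_sub_le _ _
    _ ≤ ‖u 1 * v 1‖ + ‖u 0 * v 0‖ + ‖∫ t in (0:ℝ)..1, u' t * v t‖ := by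
        have := norm_sub_le (u 1 * v 1) (u 0 * v 0); linarith
    _ ≤ Real.exp (-L) / (|lam| * L) + 1 / (|lam| * L) + (1 - Real.exp (-L)) / L / |lam| := by
        rw [h1, h0]; linarith
    _ = 2 / (|lam| * L) := by field_simp; ring

set_option maxHeartbeats 800000 in
lemma osc2 (L r m : ℝ) (hL : 0 < L) (hr : 0 < r) (hm : m ≠ 0) (u : ℝ) (hu : r ≤ |u|) :
    ‖∫ t in (0:ℝ)..1, ee (2 * Real.pi * m * (Real.exp (L * t) * u))‖ ≤ 1 / (r * |m| * L) := by
  have hu0 : u ≠ 0 := by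
    intro h
    rw [h, abs_zero] at hu
    linarith
  have hlam : 2 * Real.pi * m * u ≠ 0 := by
    have := Real.pi_pos
    positivity
  have h := osc L hL (2 * Real.pi * m * u) hlam
  have heq : (∫ t in (0:ℝ)..1, ee (2 * Real.pi * m * (Real.exp (L * t) * u)))
      = ∫ t in (0:ℝ)..1, ee (2 * Real.pi * m * u * Real.exp (L * t)) := by
    apply intervalIntegral.integral_congr
    intro t _
    have : 2 * Real.pi * m * (Real.exp (L * t) * u) = 2 * Real.pi * m * u * Real.exp (L * t) := by
      ring
    show ee _ = ee _
    rw [this]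
  rw [heq]
  refine h.trans ?_
  have habs : |2 * Real.pi * m * u| = 2 * Real.pi * |m| * |u| := by
    rw [abs_mul, abs_mul, abs_mul, _root_.abs_two, abs_of_pos Real.pi_pos]
  rw [habs, div_le_div_iff₀ (by positivity) (by positivity)]
  have hX : (0:ℝ) ≤ |m| * L := by positivity
  have h1 : r * (|m| * L) ≤ |u| * (|m| * L) :=
    mul_le_mul_of_nonneg_right hu hX
  have h2 : |u| * (|m| * L) ≤ Real.pi * (|u| * (|m| * L)) := by
    nlinarith [Real.pi_gt_three, mul_nonneg (abs_nonneg u) hX]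
  nlinarith

lemma ee_conj (θ : ℝ) : (starRingEnd ℂ) (ee θ) = ee (-θ) := by
  unfold ee
  rw [← Complex.exp_conj]
  congr 1
  rw [map_mul, Complex.conj_ofReal, Complex.conj_I]
  push_cast
  ring

lemma ee_mul (a c : ℝ) : ee a * ee c = ee (a + c) := by
  unfold ee
  rw [← Complex.exp_add]
  congr 1
  push_cast
  ring

open Real in
/-- **Fourier transform of randomly scaled measures.** For a Borel probability measure `ν` on
`ℝ`, `b > 1`, `r > 0` and `m ≠ 0`:
`∫_0^1 |ν̂ scaled by b^t at m|² dt ≤ 1/(r |m| ln b) + ∫ ν(B_r(y)) dν(y)`. -/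
theorem scaled_fourier_transform_bound (ν : Measure ℝ) [IsProbabilityMeasure ν]
    (b : ℝ) (hb : 1 < b) (r : ℝ) (hr : 0 < r) (m : ℝ) (hm : m ≠ 0) :
    (∫ t in (0:ℝ)..1,
        ‖∫ y, Complex.exp (2 * Real.pi * Complex.I * m * ((b ^ t * y : ℝ) : ℂ)) ∂ν‖ ^ 2) ≤
      1 / (r * |m| * Real.log b) + ∫ y, (ν (Metric.closedBall y r)).toReal ∂ν := by
  have hb0 : (0:ℝ) < b := lt_trans one_pos hb
  set L : ℝ := Real.log b with hLdef
  have hL : 0 < L := Real.log_pos hb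
  set C : ℝ := 1 / (r * |m| * L) with hCdef
  have hC0 : 0 ≤ C := by positivity
  set f : ℝ → ℝ → ℂ := fun t y => ee (2 * Real.pi * m * (Real.exp (L * t) * y)) with hfdef
  set g : ℝ → ℝ × ℝ → ℂ := fun t p => ee (2 * Real.pi * m * (Real.exp (L * t) * (p.1 - p.2)))
    with hgdef
  set μ : Measure (ℝ × ℝ) := ν.prod ν with hμdef
  set S : Set (ℝ × ℝ) := {p : ℝ × ℝ | |p.1 - p.2| ≤ r} with hSdef
  have hS : MeasurableSet S := by
    have : IsClosed S := isClosed_le (by fun_prop) continuous_const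
    exact this.measurableSet
  set τ : Measure ℝ := volume.restrict (Set.Ioc (0:ℝ) 1) with hτdef
  have hτfin : IsFiniteMeasure τ := by
    constructor
    rw [hτdef, Measure.restrict_apply_univ]
    simp [Real.volume_Ioc]
  have hτ1 : τ Set.univ = 1 := by
    rw [hτdef, Measure.restrict_apply_univ]
    simp [Real.volume_Ioc]
  -- continuity of uncurried g
  have hgcont : Continuous (fun q : ℝ × (ℝ × ℝ) => g q.1 q.2) := by
    apply Complex.continuous_exp.comp
    apply Continuous.mul _ continuous_const
    exact Complex.continuous_ofReal.comp (by fun_prop)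
  have hgnorm : ∀ t p, ‖g t p‖ = 1 := fun t p => ee_norm _
  -- Step A : rewrite the integrand
  have hrw : ∀ t : ℝ,
      (∫ y, Complex.exp (2 * Real.pi * Complex.I * m * ((b ^ t * y : ℝ) : ℂ)) ∂ν)
        = ∫ y, f t y ∂ν := by
    intro t
    apply MeasureTheory.integral_congr_ae
    filter_upwards with y
    show _ = Complex.exp _
    congr 1
    rw [Real.rpow_def_of_pos hb0]
    push_cast
    ring
  -- Step B : squared norm as double integral
  have hB : ∀ t : ℝ, (‖∫ y, f t y ∂ν‖ : ℝ) ^ 2 = (∫ p, g t p ∂μ).re := by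
    intro t
    have h1 : (∫ p, g t p ∂μ) = ∫ p, (f t p.1) * (starRingEnd ℂ) (f t p.2) ∂μ := by
      apply MeasureTheory.integral_congr_ae
      filter_upwards with p
      simp only [hgdef, hfdef]
      rw [ee_conj, ee_mul]
      congr 1
      ring
    rw [h1, integral_prod_mul (f t) (fun z => (starRingEnd ℂ) (f t z)), integral_conj,
      Complex.mul_conj]
    simp [Complex.normSq_eq_norm_sq, ← Complex.ofReal_pow]
  -- Gfun
  set Gfun : ℝ → ℂ := fun t => ∫ p, g t p ∂μ with hGdef
  have hGmeas : StronglyMeasurable Gfun :=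
    (hgcont.stronglyMeasurable).integral_prod_right'
  have hGbound : ∀ t, ‖Gfun t‖ ≤ 1 := by
    intro t
    refine le_trans (norm_integral_le_integral_norm _) ?_
    have h : (∫ p, ‖g t p‖ ∂μ) = ∫ p, (1:ℝ) ∂μ := by
      apply MeasureTheory.integral_congr_ae
      filter_upwards with p using hgnorm t p
    rw [h]
    simp
  have hGint : Integrable Gfun τ := by
    refine Integrable.mono' (integrable_const 1) hGmeas.aestronglyMeasurable ?_
    filter_upwards with t using hGbound t
  -- W
  set W : ℝ × ℝ → ℂ := fun p => ∫ t, g t p ∂τ with hWdef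
  have hWmeas : StronglyMeasurable W :=
    (hgcont.stronglyMeasurable).integral_prod_left'
  have hWbound : ∀ p, ‖W p‖ ≤ 1 := by
    intro p
    refine le_trans (norm_integral_le_integral_norm _) ?_
    have h : (∫ t, ‖g t p‖ ∂τ) = ∫ t, (1:ℝ) ∂τ := by
      apply MeasureTheory.integral_congr_ae
      filter_upwards with t using hgnorm t p
    rw [h]
    simp [Measure.real, hτ1]
  have hunc : Integrable (Function.uncurry g) (τ.prod μ) := by
    refine Integrable.mono' (integrable_const 1) hgcont.aestronglyMeasurable ?_
    filter_upwards with q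
    exact le_of_eq (hgnorm q.1 q.2)
  have hswap : ∫ t, Gfun t ∂τ = ∫ p, W p ∂μ := integral_integral_swap hunc
  -- pointwise bound on W
  have hWle : ∀ p, ‖W p‖ ≤ C + S.indicator (fun _ => (1:ℝ)) p := by
    intro p
    by_cases hp : |p.1 - p.2| ≤ r
    · have hind : S.indicator (fun _ => (1:ℝ)) p = 1 :=
        Set.indicator_of_mem (show p ∈ S from hp) _
      rw [hind]
      linarith [hWbound p]
    · have hind : S.indicator (fun _ => (1:ℝ)) p = 0 :=
        Set.indicator_of_notMem (show p ∉ S from hp) _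
      rw [hind, add_zero]
      have hWp : W p = ∫ t in (0:ℝ)..1, ee (2 * Real.pi * m * (Real.exp (L * t) * (p.1 - p.2))) := by
        rw [intervalIntegral.integral_of_le zero_le_one]
      rw [hWp, hCdef]
      exact osc2 L r m hL hr hm (p.1 - p.2) (not_le.mp hp).le
  have hWnormint : Integrable (fun p => ‖W p‖) μ := by
    refine Integrable.mono' (integrable_const 1) hWmeas.norm.aestronglyMeasurable ?_
    filter_upwards with p
    rw [norm_norm]
    exact hWbound p
  have hHint : Integrable (fun p => C + S.indicator (fun _ => (1:ℝ)) p) μ :=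
    (integrable_const C).add ((integrable_const (1:ℝ)).indicator hS)
  have hHval : (∫ p, (C + S.indicator (fun _ => (1:ℝ)) p) ∂μ) = C + (μ S).toReal := by
    rw [MeasureTheory.integral_add (integrable_const C) ((integrable_const 1).indicator hS),
      MeasureTheory.integral_const, MeasureTheory.integral_indicator_const (1:ℝ) hS]
    simp [Measure.real]
  have hprodS : (μ S).toReal = ∫ y, (ν (Metric.closedBall y r)).toReal ∂ν := by
    have hsec : ∀ x : ℝ, Prod.mk x ⁻¹' S = Metric.closedBall x r := by
      intro x
      ext z
      simp [hSdef, Metric.mem_closedBall, Real.dist_eq, abs_sub_comm]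
    have h := MeasureTheory.integral_toReal (μ := ν)
      ((measurable_measure_prodMk_left hS).aemeasurable)
      (Filter.Eventually.of_forall fun x => measure_lt_top ν _)
    rw [hμdef, MeasureTheory.Measure.prod_apply hS, ← h]
    apply MeasureTheory.integral_congr_ae
    filter_upwards with x
    rw [hsec x]
  have hfinal : (∫ t in (0:ℝ)..1, ‖∫ y, f t y ∂ν‖ ^ 2) ≤ C + (μ S).toReal := by
    have e1 : (∫ t in (0:ℝ)..1, ‖∫ y, f t y ∂ν‖ ^ 2) = ∫ t, (Gfun t).re ∂τ := by
      rw [intervalIntegral.integral_of_le zero_le_one]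
      apply MeasureTheory.integral_congr_ae
      filter_upwards with t using hB t
    have e2 : (∫ t, (Gfun t).re ∂τ) = (∫ t, Gfun t ∂τ).re := by
      have h := _root_.integral_re hGint
      simpa using h
    calc (∫ t in (0:ℝ)..1, ‖∫ y, f t y ∂ν‖ ^ 2)
        = (∫ t, Gfun t ∂τ).re := by rw [e1, e2]
      _ = (∫ p, W p ∂μ).re := by rw [hswap]
      _ ≤ ‖∫ p, W p ∂μ‖ := Complex.re_le_norm _
      _ ≤ ∫ p, ‖W p‖ ∂μ := norm_integral_le_integral_norm _
      _ ≤ ∫ p, (C + S.indicator (fun _ => (1:ℝ)) p) ∂μ :=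
          MeasureTheory.integral_mono hWnormint hHint hWle
      _ = C + (μ S).toReal := hHval
  simp only [hrw]
  rw [hprodS] at hfinal
  exact hfinal
end

section
/- Let b > 1, m ≠ 0, and y ≠ y' real numbers. Then |∫_0^1 e^{2πi m b^t (y−y')} dt| ≤ 2/(π |m| ln(b) |y−y'|). -/
open Complex intervalIntegral

/-- For `b > 1`, `m ≠ 0` and `y ≠ y'`:
`|∫_0^1 e^{2πi m b^t (y - y')} dt| ≤ 2/(π |m| ln(b) |y - y'|)`. -/
theorem oscillatory_integral_bound (b : ℝ) (hb : 1 < b) (m : ℝ) (hm : m ≠ 0)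
    (y y' : ℝ) (hyy : y ≠ y') :
    ‖∫ t in (0:ℝ)..1, Complex.exp (2 * Real.pi * Complex.I * m * ((b ^ t * (y - y') : ℝ) : ℂ))‖ ≤
      2 / (Real.pi * |m| * Real.log b * |y - y'|) := by
  have hb0 : (0:ℝ) < b := lt_trans one_pos hb
  set L : ℝ := Real.log b with hLdef
  have hL : 0 < L := Real.log_pos hb
  set c : ℝ := 2 * Real.pi * m * (y - y') with hcdef
  have hy : y - y' ≠ 0 := sub_ne_zero.mpr hyy
  have hc : c ≠ 0 := mul_ne_zero (mul_ne_zero (by positivity) hm) hy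
  have habsc : |c| = 2 * Real.pi * |m| * |y - y'| := by
    rw [hcdef, abs_mul, abs_mul]
    congr 2
    exact abs_of_pos (by positivity)
  have habsc_pos : 0 < |c| := abs_pos.mpr hc
  set u : ℝ → ℂ := fun t => ((b ^ (-t) : ℝ) : ℂ) with hudef
  set v : ℝ → ℂ := fun t => Complex.exp (Complex.I * c * ((b ^ t : ℝ) : ℂ)) with hvdef
  set u' : ℝ → ℂ := fun t => ((-(b ^ (-t) * L) : ℝ) : ℂ) with hu'def
  set v' : ℝ → ℂ := fun t => (Complex.I * c * ((b ^ t * L : ℝ) : ℂ)) * v t with hv'def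
  have hcontrpow : Continuous fun t : ℝ => b ^ t := by
    rw [continuous_iff_continuousAt]
    intro x
    exact Real.continuousAt_const_rpow (ne_of_gt hb0)
  have hderu : ∀ t : ℝ, HasDerivAt u (u' t) t := by
    intro t
    have h1 : HasDerivAt (fun s : ℝ => b ^ (-s)) (b ^ (-t) * L * (-1)) t :=
      ((Real.hasStrictDerivAt_const_rpow hb0 (-t)).hasDerivAt).comp t (hasDerivAt_neg t)
    have := h1.ofReal_comp
    simp only [hu'def]
    push_cast
    convert this using 1
    push_cast
    ring
  have hderv : ∀ t : ℝ, HasDerivAt v (v' t) t := by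
    intro t
    have h1 : HasDerivAt (fun s : ℝ => b ^ s) (b ^ t * L) t :=
      (Real.hasStrictDerivAt_const_rpow hb0 t).hasDerivAt
    have h2 := ((h1.ofReal_comp).const_mul (Complex.I * c)).cexp
    simp only [hvdef, hv'def]
    convert h2 using 1
    ring
  have hcontv : Continuous v :=
    Complex.continuous_exp.comp
      (continuous_const.mul (Complex.continuous_ofReal.comp hcontrpow))
  have hcontu' : Continuous u' :=
    Complex.continuous_ofReal.comp
      ((hcontrpow.comp continuous_neg).mul continuous_const).neg
  have hcontv' : Continuous v' :=
    (continuous_const.mul (Complex.continuous_ofReal.comp (hcontrpow.mul continuous_const))).mul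
      hcontv
  have hnormv : ∀ t : ℝ, ‖v t‖ = 1 := by
    intro t
    simp only [hvdef]
    rw [Complex.norm_exp]
    simp [mul_comm, mul_assoc]
  -- integration by parts
  have hibp : ∫ t in (0:ℝ)..1, u t * v' t =
      u 1 * v 1 - u 0 * v 0 - ∫ t in (0:ℝ)..1, u' t * v t :=
    intervalIntegral.integral_mul_deriv_eq_deriv_mul (fun t _ => hderu t) (fun t _ => hderv t)
      (hcontu'.intervalIntegrable 0 1) (hcontv'.intervalIntegrable 0 1)
  -- rewrite the integrand
  have hicl : (Complex.I * c * L) ≠ 0 := by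
    simp [Complex.I_ne_zero, Complex.ofReal_ne_zero, hc, ne_of_gt hL]
  have hkey : ∀ t : ℝ,
      Complex.exp (2 * Real.pi * Complex.I * m * ((b ^ t * (y - y') : ℝ) : ℂ)) =
      (Complex.I * c * L)⁻¹ * (u t * v' t) := by
    intro t
    have h1 : (b ^ (-t) : ℝ) * (b ^ t * L) = L := by
      rw [Real.rpow_neg hb0.le]
      field_simp
    have h2 : u t * v' t = (Complex.I * c * L) * v t := by
      simp only [hudef, hv'def]
      have : ((b ^ (-t) : ℝ) : ℂ) * ((b ^ t * L : ℝ) : ℂ) = (L : ℂ) := by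
        rw [← Complex.ofReal_mul, h1]
      calc ((b ^ (-t) : ℝ) : ℂ) * ((Complex.I * c * ((b ^ t * L : ℝ) : ℂ)) * v t)
          = (Complex.I * c) * (((b ^ (-t) : ℝ) : ℂ) * ((b ^ t * L : ℝ) : ℂ)) * v t := by ring
        _ = (Complex.I * c * L) * v t := by rw [this]
    rw [h2, ← mul_assoc, inv_mul_cancel₀ hicl, one_mul]
    simp only [hvdef, hcdef]
    congr 1
    push_cast
    ring
  have hint : (∫ t in (0:ℝ)..1,
        Complex.exp (2 * Real.pi * Complex.I * m * ((b ^ t * (y - y') : ℝ) : ℂ))) =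
      (Complex.I * c * L)⁻¹ * (u 1 * v 1 - u 0 * v 0 - ∫ t in (0:ℝ)..1, u' t * v t) := by
    rw [← hibp, ← intervalIntegral.integral_const_mul]
    exact intervalIntegral.integral_congr fun t _ => hkey t
  -- norm bounds
  have hnormicl : ‖(Complex.I * c * L)⁻¹‖ = (|c| * L)⁻¹ := by
    rw [norm_inv]
    congr 1
    simp [map_mul, Complex.norm_real, abs_of_pos hL]
  have hb1 : (0:ℝ) < b⁻¹ := by positivity
  have hu1 : ‖u 1 * v 1‖ ≤ b⁻¹ := by
    rw [norm_mul, hnormv]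
    simp only [hudef]
    rw [mul_one, Complex.norm_real, Real.norm_eq_abs,
      abs_of_pos (Real.rpow_pos_of_pos hb0 _)]
    rw [Real.rpow_neg hb0.le, Real.rpow_one]
  have hu0 : ‖u 0 * v 0‖ ≤ 1 := by
    rw [norm_mul, hnormv]
    simp [hudef, Real.rpow_zero]
  -- the integral of ‖u' v‖
  have hintuv : ‖∫ t in (0:ℝ)..1, u' t * v t‖ ≤ 1 - b⁻¹ := by
    have hval : (∫ t in (0:ℝ)..1, b ^ (-t) * L) = 1 - b⁻¹ := by
      have hF : ∀ t ∈ Set.uIcc (0:ℝ) 1,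
          HasDerivAt (fun s : ℝ => -(b ^ (-s))) (b ^ (-t) * L) t := by
        intro t _
        have h1 : HasDerivAt (fun s : ℝ => b ^ (-s)) (b ^ (-t) * L * (-1)) t :=
          ((Real.hasStrictDerivAt_const_rpow hb0 (-t)).hasDerivAt).comp t (hasDerivAt_neg t)
        have : HasDerivAt (fun s : ℝ => -(b ^ (-s))) (-(b ^ (-t) * L * (-1))) t := h1.neg
        convert this using 1
        ring
      have hInt : IntervalIntegrable (fun t : ℝ => b ^ (-t) * L) MeasureTheory.volume 0 1 :=
        (((hcontrpow.comp continuous_neg).mul continuous_const)).intervalIntegrable 0 1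
      rw [intervalIntegral.integral_eq_sub_of_hasDerivAt hF hInt]
      rw [Real.rpow_neg hb0.le, Real.rpow_one, Real.rpow_neg hb0.le, Real.rpow_zero]
      ring
    calc ‖∫ t in (0:ℝ)..1, u' t * v t‖
        ≤ ∫ t in (0:ℝ)..1, ‖u' t * v t‖ :=
          intervalIntegral.norm_integral_le_integral_norm zero_le_one
      _ = ∫ t in (0:ℝ)..1, b ^ (-t) * L := by
          apply intervalIntegral.integral_congr
          intro t _
          show ‖u' t * v t‖ = b ^ (-t) * L
          rw [norm_mul, hnormv, mul_one]
          simp only [hu'def]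
          rw [Complex.norm_real, Real.norm_eq_abs, abs_neg, abs_of_pos]
          positivity
      _ = 1 - b⁻¹ := hval
  -- combine
  have hsum : ‖u 1 * v 1 - u 0 * v 0 - ∫ t in (0:ℝ)..1, u' t * v t‖ ≤ 2 := by
    calc ‖u 1 * v 1 - u 0 * v 0 - ∫ t in (0:ℝ)..1, u' t * v t‖
        ≤ ‖u 1 * v 1 - u 0 * v 0‖ + ‖∫ t in (0:ℝ)..1, u' t * v t‖ := norm_sub_le _ _
      _ ≤ (‖u 1 * v 1‖ + ‖u 0 * v 0‖) + ‖∫ t in (0:ℝ)..1, u' t * v t‖ := by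
          gcongr; exact norm_sub_le _ _
      _ ≤ (b⁻¹ + 1) + (1 - b⁻¹) := by gcongr
      _ = 2 := by ring
  rw [hint, norm_mul, hnormicl]
  have h2 : (0:ℝ) < Real.pi * |m| * Real.log b * |y - y'| := by positivity
  have hfinal : (|c| * L)⁻¹ * 2 ≤ 2 / (Real.pi * |m| * Real.log b * |y - y'|) := by
    have h3 : Real.pi * |m| * Real.log b * |y - y'| ≤
        2 * Real.pi * |m| * |y - y'| * L := by
      rw [hLdef]; nlinarith
    calc (|c| * L)⁻¹ * 2 = 2 / (2 * Real.pi * |m| * |y - y'| * L) := by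
          rw [habsc]; ring
      _ ≤ 2 / (Real.pi * |m| * Real.log b * |y - y'|) := by gcongr <;> norm_num
  calc (|c| * L)⁻¹ * ‖u 1 * v 1 - u 0 * v 0 - ∫ t in (0:ℝ)..1, u' t * v t‖
      ≤ (|c| * L)⁻¹ * 2 := by gcongr
    _ ≤ _ := hfinal
end

section
/- Let X, Y be compact metric spaces, S : Y → Y continuous with invariant Borel probability measure μ, (x_k) a fixed sequence in X, and n_k → ∞. Suppose that for μ-a.e. y, the sequence of pairs (x_k, S^{n_k} y) equidistributes for a Borel probability measure ν_y on X × Y. Let ν = ∫ ν_y dμ(y) and let τ be the first-marginal of ν. Then ν = τ × μ. -/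
open MeasureTheory Filter
open scoped ENNReal NNReal

section Aux

/-- Two finite Borel measures on a metric space agreeing on integrals of continuous
real-valued functions are equal. -/
lemma measure_ext_of_integral_continuous {Ω : Type*} [MetricSpace Ω]
    [MeasurableSpace Ω] [BorelSpace Ω]
    {μ ν : Measure Ω} [IsFiniteMeasure μ] [IsFiniteMeasure ν]
    (h : ∀ f : C(Ω, ℝ), ∫ x, f x ∂μ = ∫ x, f x ∂ν) : μ = ν := by
  apply ext_of_forall_lintegral_eq_of_IsFiniteMeasure
  intro f
  have key := h ⟨fun x => (f x : ℝ), NNReal.continuous_coe.comp f.continuous⟩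
  simp only [ContinuousMap.coe_mk] at key
  rw [← BoundedContinuousFunction.toReal_lintegral_coe_eq_integral f μ,
      ← BoundedContinuousFunction.toReal_lintegral_coe_eq_integral f ν] at key
  exact (ENNReal.toReal_eq_toReal_iff' (BoundedContinuousFunction.lintegral_lt_top_of_nnreal μ f).ne
      (BoundedContinuousFunction.lintegral_lt_top_of_nnreal ν f).ne).mp key

/-- Integral of a continuous function against a `bind` of probability measures. -/
lemma integral_bind_continuous {α β : Type*} [MeasurableSpace α]
    [MetricSpace β] [CompactSpace β] [MeasurableSpace β] [BorelSpace β]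
    (μ : Measure α) [IsProbabilityMeasure μ]
    (ν : α → Measure β) (hν : Measurable ν) (hp : ∀ a, IsProbabilityMeasure (ν a))
    (f : C(β, ℝ)) :
    ∫ x, f x ∂(μ.bind ν) = ∫ a, ∫ x, f x ∂(ν a) ∂μ := by
  haveI : IsProbabilityMeasure (μ.bind ν) := by
    constructor
    rw [Measure.bind_apply MeasurableSet.univ hν.aemeasurable]
    simp [measure_univ]
  set gp : β → ℝ≥0∞ := fun x => ENNReal.ofReal (f x) with hgp
  set gm : β → ℝ≥0∞ := fun x => ENNReal.ofReal (-(f x)) with hgm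
  have measp : Measurable gp := ENNReal.measurable_ofReal.comp f.continuous.measurable
  have measm : Measurable gm := ENNReal.measurable_ofReal.comp (f.continuous.neg).measurable
  have boundp : ∀ (m : Measure β) [IsProbabilityMeasure m],
      ∫⁻ x, gp x ∂m ≤ ENNReal.ofReal ‖f‖ := by
    intro m _
    calc ∫⁻ x, gp x ∂m ≤ ∫⁻ _, ENNReal.ofReal ‖f‖ ∂m := by
          apply lintegral_mono
          intro x
          exact ENNReal.ofReal_le_ofReal ((le_abs_self _).trans (f.norm_coe_le_norm x))
      _ = ENNReal.ofReal ‖f‖ := by simp [measure_univ]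
  have boundm : ∀ (m : Measure β) [IsProbabilityMeasure m],
      ∫⁻ x, gm x ∂m ≤ ENNReal.ofReal ‖f‖ := by
    intro m _
    calc ∫⁻ x, gm x ∂m ≤ ∫⁻ _, ENNReal.ofReal ‖f‖ ∂m := by
          apply lintegral_mono
          intro x
          refine ENNReal.ofReal_le_ofReal ((le_abs_self _).trans ?_)
          rw [abs_neg]
          exact f.norm_coe_le_norm x
      _ = ENNReal.ofReal ‖f‖ := by simp [measure_univ]
  have key : ∀ (m : Measure β) [IsProbabilityMeasure m],
      ∫ x, f x ∂m = (∫⁻ x, gp x ∂m).toReal - (∫⁻ x, gm x ∂m).toReal := by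
    intro m _
    have : Integrable (fun x => f x) m := by
      exact (BoundedContinuousFunction.mkOfCompact f).integrable m
    exact integral_eq_lintegral_pos_part_sub_lintegral_neg_part this
  have measA : Measurable fun a => ∫⁻ x, gp x ∂(ν a) :=
    (Measure.measurable_lintegral measp).comp hν
  have measB : Measurable fun a => ∫⁻ x, gm x ∂(ν a) :=
    (Measure.measurable_lintegral measm).comp hν
  have ltA : ∀ᵐ a ∂μ, (∫⁻ x, gp x ∂(ν a)) < ∞ :=
    ae_of_all _ fun a => lt_of_le_of_lt (boundp (ν a)) ENNReal.ofReal_lt_top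
  have ltB : ∀ᵐ a ∂μ, (∫⁻ x, gm x ∂(ν a)) < ∞ :=
    ae_of_all _ fun a => lt_of_le_of_lt (boundm (ν a)) ENNReal.ofReal_lt_top
  have intA : Integrable (fun a => (∫⁻ x, gp x ∂(ν a)).toReal) μ := by
    refine ⟨(measA.ennreal_toReal).aestronglyMeasurable, ?_⟩
    apply HasFiniteIntegral.of_bounded (C := ‖f‖)
    refine ae_of_all _ fun a => ?_
    rw [Real.norm_eq_abs, abs_of_nonneg ENNReal.toReal_nonneg]
    calc (∫⁻ x, gp x ∂(ν a)).toReal ≤ (ENNReal.ofReal ‖f‖).toReal :=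
          ENNReal.toReal_mono ENNReal.ofReal_ne_top (boundp (ν a))
      _ = ‖f‖ := ENNReal.toReal_ofReal (norm_nonneg f)
  have intB : Integrable (fun a => (∫⁻ x, gm x ∂(ν a)).toReal) μ := by
    refine ⟨(measB.ennreal_toReal).aestronglyMeasurable, ?_⟩
    apply HasFiniteIntegral.of_bounded (C := ‖f‖)
    refine ae_of_all _ fun a => ?_
    rw [Real.norm_eq_abs, abs_of_nonneg ENNReal.toReal_nonneg]
    calc (∫⁻ x, gm x ∂(ν a)).toReal ≤ (ENNReal.ofReal ‖f‖).toReal :=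
          ENNReal.toReal_mono ENNReal.ofReal_ne_top (boundm (ν a))
      _ = ‖f‖ := ENNReal.toReal_ofReal (norm_nonneg f)
  calc ∫ x, f x ∂(μ.bind ν)
      = (∫⁻ x, gp x ∂(μ.bind ν)).toReal - (∫⁻ x, gm x ∂(μ.bind ν)).toReal := key _
    _ = (∫⁻ a, ∫⁻ x, gp x ∂(ν a) ∂μ).toReal - (∫⁻ a, ∫⁻ x, gm x ∂(ν a) ∂μ).toReal := by
        rw [Measure.lintegral_bind hν.aemeasurable measp.aemeasurable, Measure.lintegral_bind hν.aemeasurable measm.aemeasurable]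
    _ = (∫ a, (∫⁻ x, gp x ∂(ν a)).toReal ∂μ) - (∫ a, (∫⁻ x, gm x ∂(ν a)).toReal ∂μ) := by
        rw [integral_toReal measA.aemeasurable ltA, integral_toReal measB.aemeasurable ltB]
    _ = ∫ a, ((∫⁻ x, gp x ∂(ν a)).toReal - (∫⁻ x, gm x ∂(ν a)).toReal) ∂μ :=
        (integral_sub intA intB).symm
    _ = ∫ a, ∫ x, f x ∂(ν a) ∂μ := by
        apply integral_congr_ae
        refine ae_of_all _ fun a => ?_
        exact (key (ν a)).symm

end Aux

/-- **Joining lemma.** If `(x_k, S^{n_k} y)` equidistributes for `ν_y` for `μ`-a.e. `y`, then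
`ν = ∫ ν_y dμ(y)` is the product of its first marginal with `μ`. -/
theorem joining_product_lemma {X Y : Type*}
    [MetricSpace X] [CompactSpace X] [MeasurableSpace X] [BorelSpace X]
    [MetricSpace Y] [CompactSpace Y] [MeasurableSpace Y] [BorelSpace Y]
    (S : Y → Y) (hS : Continuous S) (μ : Measure Y) [IsProbabilityMeasure μ]
    (hinv : MeasurePreserving S μ μ)
    (x : ℕ → X) (n : ℕ → ℕ) (hn : Tendsto n atTop atTop)
    (ν : Y → Measure (X × Y)) (hνmeas : Measurable ν)
    (hνprob : ∀ y, IsProbabilityMeasure (ν y))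
    (hequi : ∀ᵐ y ∂μ, ∀ f : C(X × Y, ℝ),
      Tendsto (fun N : ℕ => (N : ℝ)⁻¹ * ∑ k ∈ Finset.Icc 1 N, f (x k, S^[n k] y)) atTop
        (nhds (∫ p, f p ∂(ν y)))) :
    μ.bind ν = ((μ.bind ν).map Prod.fst).prod μ := by
  haveI hbp : IsProbabilityMeasure (μ.bind ν) := by
    constructor
    rw [Measure.bind_apply MeasurableSet.univ hνmeas.aemeasurable]
    simp [measure_univ]
  haveI hτp : IsProbabilityMeasure ((μ.bind ν).map Prod.fst) :=
    Measure.isProbabilityMeasure_map measurable_fst.aemeasurable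
  apply measure_ext_of_integral_continuous
  intro F
  -- the single-variable average of F over Y
  have hGcont : Continuous fun x₀ : X => ∫ z, F (x₀, z) ∂μ := by
    apply continuous_of_dominated (bound := fun _ => ‖F‖)
    · intro x₀
      exact (F.continuous.comp (Continuous.prodMk_right x₀)).aestronglyMeasurable
    · intro x₀
      exact ae_of_all _ fun z => F.norm_coe_le_norm _
    · exact integrable_const _
    · exact ae_of_all _ fun z => F.continuous.comp (continuous_id.prodMk continuous_const)
  set G : C(X, ℝ) := ⟨fun x₀ => ∫ z, F (x₀, z) ∂μ, hGcont⟩ with hGdef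
  set H : C(X × Y, ℝ) := G.comp ⟨Prod.fst, continuous_fst⟩ with hHdef
  -- the averages of G along x
  set c : ℕ → ℝ := fun N => (N : ℝ)⁻¹ * ∑ k ∈ Finset.Icc 1 N, G (x k) with hc
  -- pick a point in the a.e. set to identify the limit of c
  obtain ⟨y₀, hy₀⟩ : ∃ y, ∀ f : C(X × Y, ℝ),
      Tendsto (fun N : ℕ => (N : ℝ)⁻¹ * ∑ k ∈ Finset.Icc 1 N, f (x k, S^[n k] y)) atTop
        (nhds (∫ p, f p ∂(ν y))) := hequi.exists
  have hcH : ∀ y : Y, (fun N : ℕ => (N : ℝ)⁻¹ * ∑ k ∈ Finset.Icc 1 N, H (x k, S^[n k] y)) = c := by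
    intro y; rfl
  have hctend : Tendsto c atTop (nhds (∫ p, H p ∂(ν y₀))) := by
    rw [← hcH y₀]; exact hy₀ H
  -- a.e. y, ∫ H dν y = ∫ H dν y₀
  have hHae : ∀ᵐ y ∂μ, ∫ p, H p ∂(ν y) = ∫ p, H p ∂(ν y₀) := by
    filter_upwards [hequi] with y hy
    have h1 : Tendsto c atTop (nhds (∫ p, H p ∂(ν y))) := by
      rw [← hcH y]; exact hy H
    exact tendsto_nhds_unique h1 hctend
  -- the integral of H against the bind equals the limit of c
  have hHint : ∫ p, H p ∂(μ.bind ν) = ∫ p, H p ∂(ν y₀) := by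
    rw [integral_bind_continuous μ ν hνmeas hνprob H]
    rw [integral_congr_ae hHae]
    simp [measure_univ]
  -- ∫ H d(bind) = ∫ G dτ = ∫ F d(τ × μ)
  have hmapeq : ∫ p, H p ∂(μ.bind ν)
      = ∫ x₀, G x₀ ∂((μ.bind ν).map Prod.fst) := by
    rw [integral_map measurable_fst.aemeasurable G.continuous.aestronglyMeasurable]
    rfl
  have hFintegrable : Integrable (fun p => F p) (((μ.bind ν).map Prod.fst).prod μ) := by
    exact (BoundedContinuousFunction.mkOfCompact F).integrable
      (((μ.bind ν).map Prod.fst).prod μ)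
  have hprodeq : ∫ p, F p ∂(((μ.bind ν).map Prod.fst).prod μ)
      = ∫ x₀, G x₀ ∂((μ.bind ν).map Prod.fst) := by
    rw [MeasureTheory.integral_prod _ hFintegrable]
    rfl
  -- dominated convergence: ∫ A_N dμ → ∫ F d(bind)
  have hmeasAN : ∀ N : ℕ, AEStronglyMeasurable
      (fun y => (N : ℝ)⁻¹ * ∑ k ∈ Finset.Icc 1 N, F (x k, S^[n k] y)) μ := by
    intro N
    apply Continuous.aestronglyMeasurable
    apply Continuous.mul continuous_const
    apply continuous_finset_sum
    intro k _
    exact F.continuous.comp (continuous_const.prodMk (hS.iterate (n k)))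
  have hboundAN : ∀ N : ℕ, ∀ᵐ y ∂μ,
      ‖(N : ℝ)⁻¹ * ∑ k ∈ Finset.Icc 1 N, F (x k, S^[n k] y)‖ ≤ ‖F‖ := by
    intro N
    refine ae_of_all _ fun y => ?_
    rw [norm_mul, Real.norm_eq_abs ((N : ℝ)⁻¹), abs_of_nonneg (by positivity)]
    calc (N : ℝ)⁻¹ * ‖∑ k ∈ Finset.Icc 1 N, F (x k, S^[n k] y)‖
        ≤ (N : ℝ)⁻¹ * ∑ k ∈ Finset.Icc 1 N, ‖F‖ := by
          gcongr
          refine (norm_sum_le _ _).trans ?_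
          apply Finset.sum_le_sum
          intro k _
          exact F.norm_coe_le_norm _
      _ = (N : ℝ)⁻¹ * (N * ‖F‖) := by
          rw [Finset.sum_const, Nat.card_Icc]
          simp [mul_comm]
      _ ≤ ‖F‖ := by
          rcases Nat.eq_zero_or_pos N with h | h
          · simp [h, norm_nonneg]
          · rw [← mul_assoc, inv_mul_cancel₀ (by positivity : (N : ℝ) ≠ 0), one_mul]
  have hDCT : Tendsto (fun N : ℕ => ∫ y, (N : ℝ)⁻¹ * ∑ k ∈ Finset.Icc 1 N, F (x k, S^[n k] y) ∂μ)
      atTop (nhds (∫ y, ∫ p, F p ∂(ν y) ∂μ)) := by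
    apply tendsto_integral_of_dominated_convergence (fun _ => ‖F‖) hmeasAN (integrable_const _)
      hboundAN
    filter_upwards [hequi] with y hy
    exact hy F
  -- compute ∫ A_N dμ using invariance
  have hterm : ∀ k : ℕ, ∫ y, F (x k, S^[n k] y) ∂μ = G (x k) := by
    intro k
    have hmp : μ.map (S^[n k]) = μ := (hinv.iterate (n k)).map_eq
    have : ∫ z, F (x k, z) ∂μ = ∫ z, F (x k, z) ∂(μ.map (S^[n k])) := by rw [hmp]
    rw [hGdef]
    simp only [ContinuousMap.coe_mk]
    have hms : AEStronglyMeasurable (fun z : Y => F (x k, z)) (μ.map (S^[n k])) :=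
      (F.continuous.comp (Continuous.prodMk_right (x k))).aestronglyMeasurable
    rw [this, integral_map (hS.iterate (n k)).measurable.aemeasurable hms]
  have hANeq : ∀ N : ℕ, ∫ y, (N : ℝ)⁻¹ * ∑ k ∈ Finset.Icc 1 N, F (x k, S^[n k] y) ∂μ = c N := by
    intro N
    rw [integral_const_mul, integral_finset_sum]
    · rw [hc]
      congr 1
      exact Finset.sum_congr rfl fun k _ => hterm k
    · intro k _
      refine ⟨(F.continuous.comp (continuous_const.prodMk (hS.iterate (n k)))).aestronglyMeasurable, ?_⟩
      apply HasFiniteIntegral.of_bounded (C := ‖F‖)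
      exact ae_of_all _ fun y => F.norm_coe_le_norm _
  -- conclusion
  have h1 : Tendsto c atTop (nhds (∫ y, ∫ p, F p ∂(ν y) ∂μ)) := by
    have := hDCT
    simp_rw [hANeq] at this
    exact this
  have h2 : ∫ y, ∫ p, F p ∂(ν y) ∂μ = ∫ p, H p ∂(ν y₀) := tendsto_nhds_unique h1 hctend
  calc ∫ p, F p ∂(μ.bind ν) = ∫ y, ∫ p, F p ∂(ν y) ∂μ :=
        integral_bind_continuous μ ν hνmeas hνprob F
    _ = ∫ p, H p ∂(ν y₀) := h2
    _ = ∫ p, H p ∂(μ.bind ν) := hHint.symm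
    _ = ∫ x₀, G x₀ ∂((μ.bind ν).map Prod.fst) := hmapeq
    _ = ∫ p, F p ∂(((μ.bind ν).map Prod.fst).prod μ) := hprodeq.symm
end

section
/- Let μ be a Borel probability measure on a compact metric space X and T : X → X continuous. Suppose that for every nonzero integer m and every ε > 0 there exists k ∈ ℕ such that μ( x : limsup_{N→∞} |(1/N) ∑_{n=1}^N e^{2πi m T_b^n(T^k x)}| < ε ) > 1 − ε, where μ is T-invariant. Then for μ-a.e. x, limsup_{N→∞} |(1/N) ∑_{n=1}^N e^{2πi m T_b^n x}| = 0 for all m ≠ 0, hence μ-a.e. x equidistributes under T_b for Lebesgue measure on ℝ/ℤ. -/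
open MeasureTheory Filter AddCircle
open scoped ENNReal NNReal

section WeylAux

/-- The Weyl average. -/
noncomputable def weylAvg (b : ℕ) (m : ℤ) (x : UnitAddCircle) (N : ℕ) : ℂ :=
  (N : ℂ)⁻¹ * ∑ n ∈ Finset.Icc 1 N, fourier m ((b ^ n) • x)

lemma norm_fourier_eq_one (m : ℤ) (y : UnitAddCircle) : ‖(fourier m y : ℂ)‖ = 1 := by
  simp [Circle.norm_coe]

/-- Averaging a continuous function along the orbit. -/
noncomputable def cAvg (b : ℕ) (x : UnitAddCircle) (N : ℕ) (f : C(UnitAddCircle, ℂ)) : ℂ :=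
  (N : ℂ)⁻¹ * ∑ n ∈ Finset.Icc 1 N, f ((b ^ n) • x)

lemma weylAvg_eq_cAvg (b : ℕ) (m : ℤ) (x : UnitAddCircle) (N : ℕ) :
    weylAvg b m x N = cAvg b x N (fourier m) := rfl

lemma norm_cAvg_le (b : ℕ) (x : UnitAddCircle) (N : ℕ) (f : C(UnitAddCircle, ℂ)) :
    ‖cAvg b x N f‖ ≤ ‖f‖ := by
  rw [cAvg, norm_mul, norm_inv, Complex.norm_natCast]
  calc (N:ℝ)⁻¹ * ‖∑ n ∈ Finset.Icc 1 N, f ((b ^ n) • x)‖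
      ≤ (N:ℝ)⁻¹ * (N * ‖f‖) := by
        refine mul_le_mul_of_nonneg_left ?_ (by positivity)
        calc ‖∑ n ∈ Finset.Icc 1 N, f ((b ^ n) • x)‖
            ≤ ∑ n ∈ Finset.Icc 1 N, ‖f ((b ^ n) • x)‖ := norm_sum_le _ _
          _ ≤ ∑ n ∈ Finset.Icc 1 N, ‖f‖ := by
              exact Finset.sum_le_sum fun n _ => f.norm_coe_le_norm _
          _ = N * ‖f‖ := by simp [mul_comm]
    _ = ((N:ℝ)⁻¹ * N) * ‖f‖ := by ring
    _ ≤ 1 * ‖f‖ := by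
        refine mul_le_mul_of_nonneg_right ?_ (norm_nonneg f)
        rcases Nat.eq_zero_or_pos N with h | h
        · simp [h]
        · rw [inv_mul_cancel₀ (by positivity : (N:ℝ) ≠ 0)]
    _ = ‖f‖ := one_mul _

lemma weylAvg_norm_le_one (b : ℕ) (m : ℤ) (x : UnitAddCircle) (N : ℕ) :
    ‖weylAvg b m x N‖ ≤ 1 := by
  refine (norm_cAvg_le b x N (fourier m)).trans ?_
  exact (ContinuousMap.norm_le _ zero_le_one).mpr fun y => le_of_eq (norm_fourier_eq_one m y)


lemma cIntegrable (f : C(UnitAddCircle, ℂ)) : Integrable f haarAddCircle :=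
  Integrable.mono' (integrable_const ‖f‖) (map_continuous f).aestronglyMeasurable
    (Filter.Eventually.of_forall fun y => f.norm_coe_le_norm y)

lemma norm_cIntegral_le (f : C(UnitAddCircle, ℂ)) :
    ‖∫ y, f y ∂haarAddCircle‖ ≤ ‖f‖ := by
  calc ‖∫ y, f y ∂haarAddCircle‖
      ≤ ‖f‖ * (haarAddCircle Set.univ).toReal :=
        norm_integral_le_of_norm_le_const (Filter.Eventually.of_forall fun y =>
          f.norm_coe_le_norm y)
    _ = ‖f‖ := by simp

lemma integral_fourier_zero : (∫ y, (fourier 0 : C(UnitAddCircle, ℂ)) y ∂haarAddCircle) = 1 := by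
  have : ∀ y : UnitAddCircle, (fourier 0 : C(UnitAddCircle, ℂ)) y = 1 := fun y => fourier_zero
  simp [this]

lemma integral_fourier_ne_zero {m : ℤ} (hm : m ≠ 0) :
    (∫ y, (fourier m : C(UnitAddCircle, ℂ)) y ∂haarAddCircle) = 0 := by
  exact integral_eq_zero_of_add_right_eq_neg
    (fourier_add_half_inv_index hm (by norm_num : (0:ℝ) < 1))

/-- Convergence of averages for elements of the span of the characters. -/
lemma tendsto_cAvg_span (b : ℕ) (x : UnitAddCircle)
    (hx : ∀ m : ℤ, m ≠ 0 → Tendsto (fun N => weylAvg b m x N) atTop (nhds 0))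
    (f : C(UnitAddCircle, ℂ)) (hf : f ∈ Submodule.span ℂ (Set.range fourier)) :
    Tendsto (fun N => cAvg b x N f) atTop (nhds (∫ y, f y ∂haarAddCircle)) := by
  induction hf using Submodule.span_induction with
  | mem f hf =>
      obtain ⟨m, rfl⟩ := hf
      rcases eq_or_ne m 0 with rfl | hm
      · rw [integral_fourier_zero]
        have hev : ∀ᶠ N : ℕ in atTop, cAvg b x N (fourier 0) = 1 := by
          filter_upwards [eventually_ge_atTop 1] with N hN
          have : ∀ n ∈ Finset.Icc 1 N, (fourier 0 : C(UnitAddCircle, ℂ)) ((b ^ n) • x) = 1 :=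
            fun n _ => fourier_zero
          rw [cAvg, Finset.sum_congr rfl this, Finset.sum_const, Nat.card_Icc]
          simp only [add_tsub_cancel_right, nsmul_eq_mul, mul_one]
          rw [inv_mul_cancel₀ (by exact_mod_cast Nat.one_le_iff_ne_zero.mp hN)]
        exact Tendsto.congr' (hev.mono fun N h => h.symm) tendsto_const_nhds
      · rw [integral_fourier_ne_zero hm]
        exact (hx m hm).congr (fun N => weylAvg_eq_cAvg b m x N)
  | zero => simp [cAvg]
  | add g h hg hh ihg ihh =>
      have : ∀ N, cAvg b x N (g + h) = cAvg b x N g + cAvg b x N h := by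
        intro N; simp [cAvg, Finset.sum_add_distrib, mul_add]
      have hint : (∫ y, (g + h) y ∂haarAddCircle)
          = (∫ y, g y ∂haarAddCircle) + ∫ y, h y ∂haarAddCircle := by
        simp only [ContinuousMap.add_apply]
        exact integral_add (cIntegrable g) (cIntegrable h)
      rw [hint]
      exact (ihg.add ihh).congr fun N => (this N).symm
  | smul c g hg ihg =>
      have hmul : ∀ N, cAvg b x N (c • g) = c * cAvg b x N g := by
        intro N
        simp only [cAvg, ContinuousMap.coe_smul, Pi.smul_apply, smul_eq_mul, Finset.mul_sum]
        refine Finset.sum_congr rfl fun n _ => by ring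
      have hint : (∫ y, (c • g) y ∂haarAddCircle) = c * ∫ y, g y ∂haarAddCircle := by
        simp only [ContinuousMap.coe_smul, Pi.smul_apply, smul_eq_mul]
        rw [← smul_eq_mul, ← integral_smul]
        simp
      rw [hint]
      exact ((ihg.const_mul c)).congr fun N => (hmul N).symm

/-- Convergence of averages for all continuous complex functions. -/
lemma tendsto_cAvg (b : ℕ) (x : UnitAddCircle)
    (hx : ∀ m : ℤ, m ≠ 0 → Tendsto (fun N => weylAvg b m x N) atTop (nhds 0))
    (f : C(UnitAddCircle, ℂ)) :
    Tendsto (fun N => cAvg b x N f) atTop (nhds (∫ y, f y ∂haarAddCircle)) := by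
  have hdense : f ∈ closure ((Submodule.span ℂ (Set.range fourier) : Submodule ℂ
      C(UnitAddCircle, ℂ)) : Set C(UnitAddCircle, ℂ)) := by
    have := span_fourier_closure_eq_top (T := (1:ℝ))
    have hf : f ∈ (Submodule.span ℂ (Set.range fourier)).topologicalClosure := by
      rw [this]; trivial
    exact hf
  rw [Metric.tendsto_atTop]
  intro ε hε
  obtain ⟨g, hg, hfg⟩ := Metric.mem_closure_iff.mp hdense (ε / 3) (by linarith)
  have hspan := tendsto_cAvg_span b x hx g hg
  obtain ⟨N₀, hN₀⟩ := (Metric.tendsto_atTop.mp hspan) (ε / 3) (by linarith)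
  refine ⟨N₀, fun N hN => ?_⟩
  have h1 : dist (cAvg b x N f) (cAvg b x N g) ≤ dist f g := by
    rw [dist_eq_norm]
    have : cAvg b x N f - cAvg b x N g = cAvg b x N (f - g) := by
      simp only [cAvg, ContinuousMap.sub_apply, Finset.sum_sub_distrib, mul_sub]
    rw [this, dist_eq_norm]
    exact norm_cAvg_le b x N (f - g)
  have h2 : dist (∫ y, g y ∂haarAddCircle) (∫ y, f y ∂haarAddCircle) ≤ dist f g := by
    rw [dist_eq_norm]
    have : (∫ y, g y ∂haarAddCircle) - ∫ y, f y ∂haarAddCircle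
        = ∫ y, (g - f) y ∂haarAddCircle := by
      simp only [ContinuousMap.sub_apply]
      rw [integral_sub (cIntegrable g) (cIntegrable f)]
    rw [this, dist_eq_norm]
    calc ‖∫ y, (g - f) y ∂haarAddCircle‖ ≤ ‖g - f‖ := norm_cIntegral_le (g - f)
      _ = ‖f - g‖ := by rw [← norm_neg]; congr 1; abel
  calc dist (cAvg b x N f) (∫ y, f y ∂haarAddCircle)
      ≤ dist (cAvg b x N f) (cAvg b x N g) + dist (cAvg b x N g) (∫ y, g y ∂haarAddCircle)
        + dist (∫ y, g y ∂haarAddCircle) (∫ y, f y ∂haarAddCircle) := dist_triangle4 _ _ _ _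
    _ < ε / 3 + ε / 3 + ε / 3 := by
        have h3 := hN₀ N hN
        have h1' := lt_of_le_of_lt h1 hfg
        have h2' := lt_of_le_of_lt h2 hfg
        linarith
    _ = ε := by ring

/-- Convergence of averages for real continuous functions, against `volume`. -/
lemma tendsto_avg_real (b : ℕ) (x : UnitAddCircle)
    (hx : ∀ m : ℤ, m ≠ 0 → Tendsto (fun N => weylAvg b m x N) atTop (nhds 0))
    (f : C(UnitAddCircle, ℝ)) :
    Tendsto (fun N : ℕ => (N : ℝ)⁻¹ * ∑ n ∈ Finset.Icc 1 N, f ((b ^ n) • x)) atTop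
      (nhds (∫ y, f y ∂(volume : Measure UnitAddCircle))) := by
  set F : C(UnitAddCircle, ℂ) :=
    ⟨fun y => (f y : ℂ), Complex.continuous_ofReal.comp f.continuous⟩ with hF
  have h := tendsto_cAvg b x hx F
  have hc : ∀ N : ℕ, cAvg b x N F
      = (((N : ℝ)⁻¹ * ∑ n ∈ Finset.Icc 1 N, f ((b ^ n) • x) : ℝ) : ℂ) := by
    intro N
    simp only [cAvg, hF, ContinuousMap.coe_mk]
    push_cast
    ring
  have hi : (∫ y, F y ∂haarAddCircle) = ((∫ y, f y ∂haarAddCircle : ℝ) : ℂ) := by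
    simp only [hF, ContinuousMap.coe_mk]
    exact integral_ofReal
  rw [hi] at h
  simp only [hc] at h
  have hre := (Complex.continuous_re.tendsto _).comp h
  simp only [Function.comp_def, Complex.ofReal_re] at hre
  have hv : (∫ y, f y ∂(volume : Measure UnitAddCircle)) = ∫ y, f y ∂haarAddCircle := by
    rw [volume_eq_smul_haarAddCircle]
    simp
  rw [hv]
  exact hre

lemma iterate_nsmul_eq (a k : ℕ) :
    (fun x : UnitAddCircle => a • x)^[k] = fun x => (a ^ k) • x := by
  funext y
  induction k with
  | zero => simp
  | succ j ih => rw [Function.iterate_succ_apply', ih, ← mul_smul, ← pow_succ']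

lemma gMeasurable (b : ℕ) (m : ℤ) :
    Measurable fun x : UnitAddCircle => limsup (fun N => ‖weylAvg b m x N‖) atTop := by
  apply Measurable.limsup
  intro N
  have hc : Continuous fun x : UnitAddCircle => weylAvg b m x N := by
    apply continuous_const.mul
    exact continuous_finset_sum _ fun n _ =>
      (map_continuous (fourier m)).comp (continuous_nsmul (b ^ n))
  exact hc.norm.measurable

lemma ae_weyl_zero (a b : ℕ) (μ : Measure UnitAddCircle) [IsProbabilityMeasure μ]
    (hinv : MeasurePreserving (fun x : UnitAddCircle => a • x) μ μ)
    (H : ∀ m : ℤ, m ≠ 0 → ∀ ε > (0:ℝ), ∃ k : ℕ,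
      μ {x : UnitAddCircle |
          limsup (fun N : ℕ => ‖(N : ℂ)⁻¹ * ∑ n ∈ Finset.Icc 1 N,
            fourier m ((b ^ n) • ((a ^ k) • x))‖) atTop < ε}
        > ENNReal.ofReal (1 - ε)) :
    ∀ᵐ x ∂μ, ∀ m : ℤ, m ≠ 0 →
      limsup (fun N => ‖weylAvg b m x N‖) atTop = 0 := by
  set g : ℤ → UnitAddCircle → ℝ :=
    fun m x => limsup (fun N => ‖weylAvg b m x N‖) atTop with hgdef
  have hSmeas : ∀ (m : ℤ) (c : ℝ), MeasurableSet {x : UnitAddCircle | g m x < c} :=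
    fun m c => measurableSet_lt (gMeasurable b m) measurable_const
  have hbound : ∀ (m : ℤ) (x : UnitAddCircle),
      IsBoundedUnder (· ≤ ·) atTop (fun N => ‖weylAvg b m x N‖) :=
    fun m x => isBoundedUnder_of ⟨1, fun N => weylAvg_norm_le_one b m x N⟩
  have hnonneg : ∀ (m : ℤ) (x : UnitAddCircle), 0 ≤ g m x := fun m x =>
    le_limsup_of_frequently_le (Frequently.of_forall fun N => norm_nonneg _) (hbound m x)
  have hfull : ∀ m : ℤ, m ≠ 0 → ∀ δ : ℝ, 0 < δ → μ {x | g m x < δ} = 1 := by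
    intro m hm δ hδ
    have key : ∀ ε : ℝ, 0 < ε → ε ≤ δ → ENNReal.ofReal (1 - ε) ≤ μ {x | g m x < δ} := by
      intro ε hε hεδ
      obtain ⟨k, hk⟩ := H m hm ε hε
      have hpow : MeasurePreserving (fun x : UnitAddCircle => (a ^ k) • x) μ μ := by
        have h := hinv.iterate k
        rwa [iterate_nsmul_eq a k] at h
      have hpre : (fun x : UnitAddCircle => (a ^ k) • x) ⁻¹' {y | g m y < ε} =
          {x : UnitAddCircle |
            limsup (fun N : ℕ => ‖(N : ℂ)⁻¹ * ∑ n ∈ Finset.Icc 1 N,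
              fourier m ((b ^ n) • ((a ^ k) • x))‖) atTop < ε} := rfl
      have hmp := hpow.measure_preimage (hSmeas m ε).nullMeasurableSet
      rw [hpre] at hmp
      have h1 : ENNReal.ofReal (1 - ε) ≤ μ {y | g m y < ε} := by
        rw [← hmp]; exact le_of_lt hk
      exact h1.trans (measure_mono fun y hy => lt_of_lt_of_le hy hεδ)
    refine le_antisymm prob_le_one ?_
    refine ENNReal.le_of_forall_pos_le_add fun ε' hε' _ => ?_
    have hε'r : (0:ℝ) < (ε' : ℝ) := by exact_mod_cast hε'
    set εr : ℝ := min δ (min (ε' : ℝ) 1) / 2 with hεrdef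
    have hεr0 : 0 < εr := by
      apply div_pos (lt_min hδ (lt_min hε'r one_pos)) two_pos
    have hεrδ : εr ≤ δ := by
      have := min_le_left δ (min (ε' : ℝ) 1)
      rw [hεrdef]; linarith
    have hεr1 : εr ≤ 1 := by
      have h1 := min_le_right δ (min (ε' : ℝ) 1)
      have h2 := min_le_right (ε' : ℝ) 1
      rw [hεrdef]; linarith
    have hεrε' : εr ≤ (ε' : ℝ) := by
      have h1 := min_le_right δ (min (ε' : ℝ) 1)
      have h2 := min_le_left (ε' : ℝ) 1
      rw [hεrdef]; linarith
    have h1 := key εr hεr0 hεrδ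
    calc (1:ℝ≥0∞) = ENNReal.ofReal (1 - εr) + ENNReal.ofReal εr := by
          rw [← ENNReal.ofReal_add (by linarith) hεr0.le]
          norm_num
      _ ≤ μ {x | g m x < δ} + (ε' : ℝ≥0∞) := by
          refine add_le_add h1 ?_
          calc ENNReal.ofReal εr ≤ ENNReal.ofReal (ε' : ℝ) := ENNReal.ofReal_le_ofReal hεrε'
            _ = (ε' : ℝ≥0∞) := ENNReal.ofReal_coe_nnreal
  have hmain : ∀ᵐ x ∂μ, ∀ m : ℤ, m ≠ 0 → ∀ j : ℕ, g m x < 1 / (j + 1) := by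
    rw [ae_all_iff]
    intro m
    rcases eq_or_ne m 0 with rfl | hm
    · exact ae_of_all _ fun x hm0 => absurd rfl hm0
    · have : ∀ᵐ x ∂μ, ∀ j : ℕ, g m x < 1 / (j + 1) := by
        rw [ae_all_iff]
        intro j
        have hfj := hfull m hm (1 / (j + 1)) (by positivity)
        rw [ae_iff]
        have hcompl : {x : UnitAddCircle | ¬ g m x < 1 / (j + 1)}
            = {x | g m x < 1 / (j + 1)}ᶜ := rfl
        rw [hcompl, measure_compl (hSmeas m _) (measure_ne_top μ _), hfj, measure_univ,
          tsub_self]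
      exact this.mono fun x h _ => h
  filter_upwards [hmain] with x hx
  intro m hm
  refine le_antisymm ?_ (hnonneg m x)
  by_contra hpos
  push_neg at hpos
  obtain ⟨j, hj⟩ := exists_nat_one_div_lt hpos
  exact lt_asymm hj (hx m hm j)

end WeylAux


/-- **Reduction of Host's theorem via Weyl's criterion.** Let `μ` be `T_a`-invariant on
`ℝ/ℤ`. If for every nonzero `m` and every `ε > 0` there is `k` with
`μ(x : limsup_N |(1/N) ∑_{n=1}^N e(m T_b^n T_a^k x)| < ε) > 1 - ε`, then for `μ`-a.e. `x` the
Weyl sums vanish for all `m ≠ 0`, hence `x` equidistributes under `T_b` for Lebesgue. -/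
theorem weyl_reduction (a b : ℕ) (ha : 2 ≤ a) (hb : 2 ≤ b)
    (μ : Measure UnitAddCircle) [IsProbabilityMeasure μ]
    (hinv : MeasurePreserving (fun x : UnitAddCircle => a • x) μ μ)
    (H : ∀ m : ℤ, m ≠ 0 → ∀ ε > (0:ℝ), ∃ k : ℕ,
      μ {x : UnitAddCircle |
          limsup (fun N : ℕ => ‖(N : ℂ)⁻¹ * ∑ n ∈ Finset.Icc 1 N,
            fourier m ((b ^ n) • ((a ^ k) • x))‖) atTop < ε}
        > ENNReal.ofReal (1 - ε)) :
    ∀ᵐ x ∂μ,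
      (∀ m : ℤ, m ≠ 0 →
        limsup (fun N : ℕ => ‖(N : ℂ)⁻¹ * ∑ n ∈ Finset.Icc 1 N,
          fourier m ((b ^ n) • x)‖) atTop = 0) ∧
      ∀ f : C(UnitAddCircle, ℝ),
        Tendsto (fun N : ℕ => (N : ℝ)⁻¹ * ∑ n ∈ Finset.Icc 1 N, f ((b ^ n) • x)) atTop
          (nhds (∫ y, f y ∂(volume : Measure UnitAddCircle))) := by
  filter_upwards [ae_weyl_zero a b μ hinv H] with x hx
  have htend : ∀ m : ℤ, m ≠ 0 → Tendsto (fun N => weylAvg b m x N) atTop (nhds 0) := by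
    intro m hm
    rw [tendsto_zero_iff_norm_tendsto_zero]
    have hb' : IsBoundedUnder (· ≤ ·) atTop (fun N => ‖weylAvg b m x N‖) :=
      isBoundedUnder_of ⟨1, fun N => weylAvg_norm_le_one b m x N⟩
    refine Metric.tendsto_nhds.mpr fun ε hε => ?_
    have hev := eventually_lt_of_limsup_lt (by rw [hx m hm]; exact hε) hb'
    filter_upwards [hev] with N hN
    rw [Real.dist_eq, sub_zero, abs_of_nonneg (norm_nonneg _)]
    exact hN
  exact ⟨fun m hm => hx m hm, fun f => tendsto_avg_real b x htend f⟩
end
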